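/- If α, β ∈ ℍ satisfy Re(α) = Re(β), |α| = |β|, and α ≠ β, then (α − β)·α·(α − β)⁻¹ = star β. -/

import Mathlib

open Quaternion Filter Matrix

noncomputable section

/-- The imaginary unit `i` of the real quaternions. -/
def qi : ℍ := ⟨0, 1, 0, 0⟩

/-- The imaginary unit `j` of the real quaternions. -/
def qj : ℍ := ⟨0, 0, 1, 0⟩

/-- The Pick matrix of `f : ℍ → ℍ` at the points `z 0, …, z (n-1)` of the unit ball:
its `(i,j)` entry is `∑ₖ (z i)^k (1 - f(z i) * star f(z j)) (star (z j))^k`. -/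
def pickMatrix {n : ℕ} (f : ℍ → ℍ) (z : Fin n → ℍ) : Matrix (Fin n) (Fin n) ℍ :=
  Matrix.of fun i j => ∑' k : ℕ, z i ^ k * (1 - f (z i) * star (f (z j))) * (star (z j)) ^ k

/-- A quaternionic matrix is positive semidefinite if every quadratic form
`∑ᵢⱼ star (v i) * P i j * v j` is a nonnegative real scalar quaternion. -/
def QPosSemidef {n : ℕ} (P : Matrix (Fin n) (Fin n) ℍ) : Prop :=
  ∀ v : Fin n → ℍ, ∃ r : ℝ, 0 ≤ r ∧ (∑ i, ∑ j, star (v i) * P i j * v j) = (r : ℍ)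

/-- `f` is left-regular on the unit ball: it is given there by an (absolutely convergent)
power series with quaternionic coefficients on the right. -/
def LeftRegular (f : ℍ → ℍ) : Prop :=
  ∃ c : ℕ → ℍ,
    Filter.limsup (fun k : ℕ => ‖c k‖ ^ (1 / (k : ℝ))) Filter.atTop ≤ 1 ∧
    ∀ α : ℍ, ‖α‖ < 1 → f α = ∑' k : ℕ, α ^ k * c k

/-- The `n × n` lower-triangular Toeplitz matrix built from a sequence. -/
def toeplitz {R : Type*} [Zero R] (n : ℕ) (g : ℕ → R) : Matrix (Fin n) (Fin n) R :=
  Matrix.of fun i j => if (j : ℕ) ≤ (i : ℕ) then g ((i : ℕ) - (j : ℕ)) else 0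

/-- If `α` and `β` are distinct conjugate quaternions, then `(α - β) α (α - β)⁻¹ = star β`. -/
theorem conj_by_difference (α β : ℍ) (hre : α.re = β.re) (hnorm : ‖α‖ = ‖β‖)
    (hne : α ≠ β) :
    (α - β) * α * (α - β)⁻¹ = star β := by
  have hns : Quaternion.normSq α = Quaternion.normSq β := by
    simpa [Quaternion.normSq_eq_norm_mul_self] using congrArg (fun x : ℝ => x * x) hnorm
  have h2 : α.re^2 + α.imI^2 + α.imJ^2 + α.imK^2
      = β.re^2 + β.imI^2 + β.imJ^2 + β.imK^2 := by
    simpa [Quaternion.normSq_def', sq] using hns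
  have key : (α - β) * α = star β * (α - β) := by
    ext <;> simp only [sub_mul, Quaternion.re_sub, Quaternion.imI_sub, Quaternion.imJ_sub,
      Quaternion.imK_sub, Quaternion.re_mul, Quaternion.imI_mul,
      Quaternion.imJ_mul, Quaternion.imK_mul, Quaternion.re_star, Quaternion.imI_star,
      Quaternion.imJ_star, Quaternion.imK_star]
    · linear_combination 2 * α.re * hre - h2
    · linear_combination 2 * α.imI * hre
    · linear_combination 2 * α.imJ * hre
    · linear_combination 2 * α.imK * hre
  have hsub : α - β ≠ 0 := sub_ne_zero.mpr hne
  rw [key, mul_assoc, mul_inv_cancel₀ hsub, mul_one]
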